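/- The function P ↦ r*(P), where r*(P) = sup{t ≥ 0 : Σᵢ βᵢ(t) ≤ 1 for β(t) given by the backward recursion βᵢ(t) = ((2^t−1)/(P hᵢ))(P hᵢ Σ_{l>i} β_l(t) + σ²)}, is non-decreasing in P > 0. -/

import Mathlib

open Finset Real

/-- the optimal max-min fairness rate `r*(P)` is non-decreasing
in the power budget `P > 0`. `B P t` is the power allocation given by the
backward recursion at budget `P` and rate `t`. -/
theorem noma_maxmin_rate_monotone_in_power (N : ℕ) (hN : 1 ≤ N) (σ2 : ℝ)
    (hσ : 0 < σ2) (h : Fin N → ℝ) (hh : ∀ i, 0 < h i)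
    (B : ℝ → ℝ → Fin N → ℝ)
    (hrec : ∀ P > (0 : ℝ), ∀ t > (0 : ℝ), ∀ i : Fin N,
      B P t i = ((2 : ℝ) ^ t - 1) / (P * h i) *
        (P * h i * (∑ l ∈ Finset.univ.filter (fun l => i < l), B P t l) + σ2))
    (rstar : ℝ → ℝ)
    (hrstar : ∀ P > (0 : ℝ),
      rstar P = sSup {t : ℝ | 0 ≤ t ∧ (∑ i, B P t i) ≤ 1}) :
    ∀ P₁ P₂ : ℝ, 0 < P₁ → P₁ ≤ P₂ → rstar P₁ ≤ rstar P₂ := by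
  intro P₁ P₂ hP1 hle
  have hP2 : 0 < P₂ := lt_of_lt_of_le hP1 hle
  -- 2^t > 1 for t > 0
  have hc : ∀ t > (0:ℝ), (1:ℝ) < (2:ℝ) ^ t := by
    intro t ht
    exact Real.one_lt_rpow_iff_of_pos (by norm_num) |>.mpr (Or.inl ⟨by norm_num, ht⟩)
  -- clean form of the recursion
  have hrec' : ∀ P > (0:ℝ), ∀ t > (0:ℝ), ∀ i : Fin N,
      B P t i = ((2:ℝ) ^ t - 1) *
        ((∑ l ∈ Finset.univ.filter (fun l => i < l), B P t l) + σ2 / (P * h i)) := by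
    intro P hP t ht i
    rw [hrec P hP t ht i]
    have h1 : P * h i ≠ 0 := ne_of_gt (mul_pos hP (hh i))
    field_simp
    have hi0 : h i ≠ 0 := (hh i).ne'
    rw [div_eq_iff hi0, mul_assoc _ _ (h i), add_mul, div_mul_cancel₀ _ hi0]
    ring
  -- nonnegativity
  have hnn : ∀ P > (0:ℝ), ∀ t > (0:ℝ), ∀ i : Fin N, 0 ≤ B P t i := by
    intro P hP t ht
    have key : ∀ k : ℕ, ∀ i : Fin N, N - i.val ≤ k → 0 ≤ B P t i := by
      intro k
      induction k with
      | zero => intro i hi; exact absurd hi (by have := i.isLt; omega)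
      | succ k ih =>
        intro i hi
        rw [hrec' P hP t ht i]
        have hc' : (0:ℝ) ≤ (2:ℝ) ^ t - 1 := by have := hc t ht; linarith
        apply mul_nonneg hc'
        apply add_nonneg
        · apply Finset.sum_nonneg
          intro l hl
          simp only [Finset.mem_filter, Fin.lt_def] at hl
          exact ih l (by have := hl.2; omega)
        · exact le_of_lt (div_pos hσ (mul_pos hP (hh i)))
    intro i; exact key N i (by omega)
  -- antitone in P
  have hanti : ∀ t > (0:ℝ), ∀ i : Fin N, B P₂ t i ≤ B P₁ t i := by
    intro t ht
    have key : ∀ k : ℕ, ∀ i : Fin N, N - i.val ≤ k → B P₂ t i ≤ B P₁ t i := by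
      intro k
      induction k with
      | zero => intro i hi; exact absurd hi (by have := i.isLt; omega)
      | succ k ih =>
        intro i hi
        rw [hrec' P₁ hP1 t ht i, hrec' P₂ hP2 t ht i]
        have hc' : (0:ℝ) ≤ (2:ℝ) ^ t - 1 := by have := hc t ht; linarith
        apply mul_le_mul_of_nonneg_left _ hc'
        apply add_le_add
        · apply Finset.sum_le_sum
          intro l hl
          simp only [Finset.mem_filter, Fin.lt_def] at hl
          exact ih l (by have := hl.2; omega)
        · exact div_le_div_of_nonneg_left hσ.le (mul_pos hP1 (hh i)) (by nlinarith [hh i])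
    intro i; exact key N i (by omega)
  -- M P : total "noise" scale
  set M : ℝ → ℝ := fun P => ∑ j, σ2 / (P * h j) with hMdef
  have hMpos : ∀ P > (0:ℝ), 0 < M P := by
    intro P hP
    exact Finset.sum_pos (fun j _ => div_pos hσ (mul_pos hP (hh j)))
      ⟨⟨0, by omega⟩, Finset.mem_univ _⟩
  have haM : ∀ P > (0:ℝ), ∀ i : Fin N, σ2 / (P * h i) ≤ M P := by
    intro P hP i
    exact Finset.single_le_sum (f := fun j => σ2 / (P * h j))
      (fun j _ => le_of_lt (div_pos hσ (mul_pos hP (hh j)))) (Finset.mem_univ i)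
  -- upper bound on tail sums
  have hR : ∀ P > (0:ℝ), ∀ t > (0:ℝ), ∀ k : ℕ, ∀ i : Fin N, N - i.val ≤ k →
      B P t i + (∑ l ∈ Finset.univ.filter (fun l => i < l), B P t l)
        ≤ (((2:ℝ) ^ t) ^ k - 1) * M P := by
    intro P hP t ht k
    induction k with
    | zero => intro i hi; exact absurd hi (by have := i.isLt; omega)
    | succ k ih =>
      intro i hi
      have hc' : (0:ℝ) ≤ (2:ℝ) ^ t - 1 := by have := hc t ht; linarith
      have hvpos : (0:ℝ) < (2:ℝ) ^ t := by have := hc t ht; linarith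
      have hMnn : (0:ℝ) ≤ M P := (hMpos P hP).le
      have hpow1 : (1:ℝ) ≤ ((2:ℝ) ^ t) ^ k := one_le_pow₀ (hc t ht).le
      have hSbound : (∑ l ∈ Finset.univ.filter (fun l => i < l), B P t l)
          ≤ (((2:ℝ) ^ t) ^ k - 1) * M P := by
        by_cases hcase : i.val + 1 < N
        · set j : Fin N := ⟨i.val + 1, hcase⟩ with hjdef
          have hset : Finset.univ.filter (fun l => i < l)
              = insert j (Finset.univ.filter (fun l : Fin N => j < l)) := by
            ext l
            simp only [Finset.mem_filter, Finset.mem_insert, Finset.mem_univ, true_and,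
              Fin.lt_def, Fin.ext_iff, hjdef]
            omega
          have hjnot : j ∉ Finset.univ.filter (fun l : Fin N => j < l) := by
            simp [Finset.mem_filter]
          rw [hset, Finset.sum_insert hjnot]
          exact ih j (by simp only [hjdef]; omega)
        · have hempty : Finset.univ.filter (fun l => i < l) = (∅ : Finset (Fin N)) := by
            ext l
            simp only [Finset.mem_filter, Finset.mem_univ, true_and, Fin.lt_def,
              Finset.notMem_empty, iff_false]
            have := l.isLt
            omega
          rw [hempty, Finset.sum_empty]
          nlinarith
      rw [hrec' P hP t ht i]
      have ha := haM P hP i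
      set S := (∑ l ∈ Finset.univ.filter (fun l => i < l), B P t l) with hSdef
      have h1 : (2:ℝ) ^ t * S ≤ (2:ℝ) ^ t * ((((2:ℝ) ^ t) ^ k - 1) * M P) :=
        mul_le_mul_of_nonneg_left hSbound (by positivity)
      have h2 : ((2:ℝ) ^ t - 1) * (σ2 / (P * h i)) ≤ ((2:ℝ) ^ t - 1) * M P :=
        mul_le_mul_of_nonneg_left ha hc'
      calc ((2:ℝ) ^ t - 1) * (S + σ2 / (P * h i)) + S
          = (2:ℝ) ^ t * S + ((2:ℝ) ^ t - 1) * (σ2 / (P * h i)) := by ring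
        _ ≤ (2:ℝ) ^ t * ((((2:ℝ) ^ t) ^ k - 1) * M P) + ((2:ℝ) ^ t - 1) * M P :=
            add_le_add h1 h2
        _ = (((2:ℝ) ^ t) ^ (k + 1) - 1) * M P := by ring
  -- total sum bounds
  have hsum_le : ∀ P > (0:ℝ), ∀ t > (0:ℝ),
      (∑ i, B P t i) ≤ (((2:ℝ) ^ t) ^ N - 1) * M P := by
    intro P hP t ht
    set i0 : Fin N := ⟨0, by omega⟩ with hi0def
    have hset : (Finset.univ : Finset (Fin N))
        = insert i0 (Finset.univ.filter (fun l : Fin N => i0 < l)) := by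
      ext l
      simp only [Finset.mem_insert, Finset.mem_filter, Finset.mem_univ, true_and,
        Fin.lt_def, Fin.ext_iff, hi0def, true_iff]
      omega
    have hi0not : i0 ∉ Finset.univ.filter (fun l : Fin N => i0 < l) := by
      simp [Finset.mem_filter]
    have hsplit : (∑ i, B P t i)
        = B P t i0 + (∑ l ∈ Finset.univ.filter (fun l : Fin N => i0 < l), B P t l) := by
      conv_lhs => rw [hset]
      rw [Finset.sum_insert hi0not]
    calc (∑ i, B P t i)
        = B P t i0 + (∑ l ∈ Finset.univ.filter (fun l : Fin N => i0 < l), B P t l) :=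
          hsplit
      _ ≤ (((2:ℝ) ^ t) ^ N - 1) * M P := hR P hP t ht N i0 (by simp [hi0def])
  have hsum_ge : ∀ P > (0:ℝ), ∀ t > (0:ℝ),
      ((2:ℝ) ^ t - 1) * M P ≤ (∑ i, B P t i) := by
    intro P hP t ht
    have hc' : (0:ℝ) ≤ (2:ℝ) ^ t - 1 := by have := hc t ht; linarith
    rw [hMdef, Finset.mul_sum]
    apply Finset.sum_le_sum
    intro i _
    rw [hrec' P hP t ht i]
    have hS : 0 ≤ (∑ l ∈ Finset.univ.filter (fun l => i < l), B P t l) :=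
      Finset.sum_nonneg fun l _ => hnn P hP t ht l
    nlinarith [haM P hP i]
  -- the threshold point t0 P belongs to the feasible set
  have hmem : ∀ P > (0:ℝ), (0:ℝ) < Real.logb 2 (1 + 1 / M P) / N ∧
      Real.logb 2 (1 + 1 / M P) / N ∈ {t : ℝ | 0 ≤ t ∧ (∑ i, B P t i) ≤ 1} := by
    intro P hP
    have hM := hMpos P hP
    have h1M : (1:ℝ) < 1 + 1 / M P := by
      have : 0 < 1 / M P := by positivity
      linarith
    have hlogpos : 0 < Real.logb 2 (1 + 1 / M P) := Real.logb_pos (by norm_num) h1M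
    have hNpos : (0:ℝ) < (N:ℝ) := by exact_mod_cast Nat.lt_of_lt_of_le Nat.zero_lt_one hN
    have ht0 : (0:ℝ) < Real.logb 2 (1 + 1 / M P) / N := by positivity
    refine ⟨ht0, ht0.le, ?_⟩
    set t0 := Real.logb 2 (1 + 1 / M P) / N with ht0def
    have hkey : (((2:ℝ) ^ t0) ^ N : ℝ) = 1 + 1 / M P := by
      rw [← Real.rpow_natCast ((2:ℝ) ^ t0) N, ← Real.rpow_mul (by norm_num : (0:ℝ) ≤ 2)]
      have : t0 * (N:ℝ) = Real.logb 2 (1 + 1 / M P) := by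
        rw [ht0def]; field_simp
      rw [this, Real.rpow_logb (by norm_num) (by norm_num) (by linarith)]
    calc (∑ i, B P t0 i) ≤ (((2:ℝ) ^ t0) ^ N - 1) * M P := hsum_le P hP t0 ht0
      _ = (1 / M P) * M P := by rw [hkey]; ring
      _ = 1 := by field_simp
  -- the feasible set is bounded above
  have hbdd : ∀ P > (0:ℝ), BddAbove {t : ℝ | 0 ≤ t ∧ (∑ i, B P t i) ≤ 1} := by
    intro P hP
    have hM := hMpos P hP
    have h1M : (1:ℝ) ≤ 1 + 1 / M P := by
      have : 0 < 1 / M P := by positivity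
      linarith
    refine ⟨Real.logb 2 (1 + 1 / M P), ?_⟩
    rintro t ⟨ht0, htsum⟩
    rcases eq_or_lt_of_le ht0 with rfl | htpos
    · exact Real.logb_nonneg (by norm_num) h1M
    · have h1 : ((2:ℝ) ^ t - 1) * M P ≤ 1 := le_trans (hsum_ge P hP t htpos) htsum
      have h2 : (2:ℝ) ^ t ≤ 1 + 1 / M P := by
        rw [add_comm, ← sub_le_iff_le_add]
        exact (le_div_iff₀ hM).mpr h1
      calc t = Real.logb 2 ((2:ℝ) ^ t) :=
            (Real.logb_rpow (by norm_num) (by norm_num)).symm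
        _ ≤ Real.logb 2 (1 + 1 / M P) :=
            Real.logb_le_logb_of_le (by norm_num) (Real.rpow_pos_of_pos (by norm_num) t) h2
  -- conclude
  rw [hrstar P₁ hP1, hrstar P₂ hP2]
  obtain ⟨ht01, hmem1⟩ := hmem P₁ hP1
  obtain ⟨ht02, hmem2⟩ := hmem P₂ hP2
  apply csSup_le ⟨_, hmem1⟩
  rintro t ⟨ht0, htsum⟩
  rcases eq_or_lt_of_le ht0 with rfl | htpos
  · exact le_trans ht02.le (le_csSup (hbdd P₂ hP2) hmem2)
  · apply le_csSup (hbdd P₂ hP2)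
    exact ⟨ht0, le_trans (Finset.sum_le_sum fun i _ => hanti t htpos i) htsum⟩
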